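/- Suboptimality bound for the H₂ surrogate: Let F*, F̃ be invertible m×m matrices (m = nN) with |det F*| = |det F̃| = c > 0 and σ_max(F̃) ≤ σ_max(F*). Define H₂(F) = Σ_{i=1}^{m} σ_i(F⁻¹)², and let σ̃ = (σ₂(F̃)²/σ_m(F̃)², ..., σ₂(F̃)²/σ₂(F̃)²) and σ* = (σ_m(F*)²/σ_m(F*)², ..., σ_m(F*)²/σ₂(F*)²) (vectors of length m−1). Then H₂(F̃)/H₂(F*) ≤ (m/(m−1)) · exp((Var(σ̃) − Var(σ*))/2). -/

import Mathlib

/-- Singular values of a square real matrix (unordered):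
square roots of the eigenvalues of `Mᵀ * M`. -/
noncomputable def svals {m : ℕ} (M : Matrix (Fin m) (Fin m) ℝ) : Fin m → ℝ :=
  fun i => Real.sqrt (((by simpa only [Matrix.conjTranspose_eq_transpose_of_trivial] using Matrix.isHermitian_conjTranspose_mul_self M : (Matrix.transpose M * M).IsHermitian)).eigenvalues i)

/-- Singular values arranged in decreasing order: `svDesc M 0` is the largest. -/
noncomputable def svDesc {m : ℕ} (M : Matrix (Fin m) (Fin m) ℝ) : Fin m → ℝ :=
  fun i => svals M (Tuple.sort (svals M) i.rev)
/-- Empirical variance of a vector. -/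
noncomputable def empVar {k : ℕ} (z : Fin k → ℝ) : ℝ :=
  (∑ i, (z i - (∑ j, z j) / k) ^ 2) / k

section Aux
open Matrix Polynomial
variable {m : ℕ}

private lemma gderiv (A : ℝ) (y : ℝ) (hy : 0 < y) (hA : A ≠ 0) :
    HasDerivAt (fun y : ℝ => (A - y)/A + (y - A)^2/2 + Real.log y)
      ((y - A) + (1/y - 1/A)) y := by
  have h1 : HasDerivAt (fun y : ℝ => (A - y)/A) (-1/A) y := by
    simpa using ((hasDerivAt_id y).const_sub A).div_const A
  have h2 : HasDerivAt (fun y : ℝ => (y - A)^2/2) (y - A) y := by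
    have := (((hasDerivAt_id y).sub_const A).pow 2).div_const 2
    refine this.congr_deriv ?_
    simp only [id_eq]
    push_cast
    ring
  have h3 : HasDerivAt Real.log y⁻¹ y := Real.hasDerivAt_log (ne_of_gt hy)
  have := (h1.add h2).add h3
  refine this.congr_deriv ?_
  ring

private lemma la {A x : ℝ} (hA : 1 ≤ A) (hx : 1 ≤ x) :
    Real.log A - Real.log x ≤ (A - x)/A + (x - A)^2/2 := by
  have h0A : (0:ℝ) < A := by linarith
  set g : ℝ → ℝ := fun y => (A - y)/A + (y - A)^2/2 + Real.log y with hg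
  have hcont : ∀ a b : ℝ, 1 ≤ a → ContinuousOn g (Set.Icc a b) := by
    intro a b ha
    apply ContinuousOn.add
    · exact (Continuous.add (by continuity) (by continuity)).continuousOn
    · apply Real.continuousOn_log.mono
      intro y hy
      simp only [Set.mem_Icc] at hy
      simp only [Set.mem_compl_iff, Set.mem_singleton_iff]
      intro h; rw [h] at hy; linarith [hy.1]
  have key : g A ≤ g x := by
    rcases le_total A x with h | h
    · have := monotoneOn_of_deriv_nonneg (convex_Icc A x) (hcont A x hA)
        (fun y hy => by
          rw [interior_Icc] at hy
          exact (gderiv A y (by linarith [hy.1]) (ne_of_gt h0A)).differentiableAt.differentiableWithinAt)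
        (fun y hy => by
          rw [interior_Icc] at hy
          obtain ⟨hy1, hy2⟩ := hy
          rw [(gderiv A y (by linarith) (ne_of_gt h0A)).deriv]
          have h0y : (0:ℝ) < y := by linarith
          have : 1/y - 1/A = -((y - A)/(y*A)) := by field_simp; ring
          rw [this]
          have hyA : 1 ≤ y * A := by nlinarith
          have : (y - A)/(y*A) ≤ (y - A) := by
            rw [div_le_iff₀ (by positivity)]
            nlinarith
          linarith)
      exact this (Set.left_mem_Icc.2 h) (Set.right_mem_Icc.2 h) h
    · have := antitoneOn_of_deriv_nonpos (convex_Icc x A) (hcont x A hx)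
        (fun y hy => by
          rw [interior_Icc] at hy
          exact (gderiv A y (by linarith [hy.1]) (ne_of_gt h0A)).differentiableAt.differentiableWithinAt)
        (fun y hy => by
          rw [interior_Icc] at hy
          obtain ⟨hy1, hy2⟩ := hy
          rw [(gderiv A y (by linarith) (ne_of_gt h0A)).deriv]
          have h0y : (0:ℝ) < y := by linarith
          have : 1/y - 1/A = -((y - A)/(y*A)) := by field_simp; ring
          rw [this]
          have hyA : 1 ≤ y * A := by nlinarith
          have : (y - A) ≤ (y - A)/(y*A) := by
            rw [le_div_iff₀ (by positivity)]
            nlinarith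
          linarith)
      exact this (Set.left_mem_Icc.2 h) (Set.right_mem_Icc.2 h) h
  have hgA : g A = Real.log A := by simp [hg]
  rw [hgA] at key
  simp only [hg] at key
  linarith

private lemma lb {A x : ℝ} (hA0 : 0 < A) (hA : A ≤ 1) (hx0 : 0 < x) (hx : x ≤ 1) :
    Real.log x - Real.log A ≤ (x - A)/A - (x - A)^2/2 := by
  set g : ℝ → ℝ := fun y => (A - y)/A + (y - A)^2/2 + Real.log y with hg
  have hcont : ∀ a b : ℝ, 0 < a → ContinuousOn g (Set.Icc a b) := by
    intro a b ha
    apply ContinuousOn.add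
    · exact (Continuous.add (by continuity) (by continuity)).continuousOn
    · apply Real.continuousOn_log.mono
      intro y hy
      simp only [Set.mem_Icc] at hy
      simp only [Set.mem_compl_iff, Set.mem_singleton_iff]
      intro h; rw [h] at hy; linarith [hy.1]
  have key : g x ≤ g A := by
    rcases le_total x A with h | h
    · have := monotoneOn_of_deriv_nonneg (convex_Icc x A) (hcont x A hx0)
        (fun y hy => by
          rw [interior_Icc] at hy
          exact (gderiv A y (by linarith [hy.1]) (ne_of_gt hA0)).differentiableAt.differentiableWithinAt)
        (fun y hy => by
          rw [interior_Icc] at hy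
          obtain ⟨hy1, hy2⟩ := hy
          have h0y : (0:ℝ) < y := by linarith
          rw [(gderiv A y h0y (ne_of_gt hA0)).deriv]
          have : 1/y - 1/A = -((y - A)/(y*A)) := by field_simp; ring
          rw [this]
          have hyA : y * A ≤ 1 := by nlinarith
          have : (y - A)/(y*A) ≤ (y - A) := by
            rw [div_le_iff₀ (by positivity)]
            nlinarith
          linarith)
      exact this (Set.left_mem_Icc.2 h) (Set.right_mem_Icc.2 h) h
    · have := antitoneOn_of_deriv_nonpos (convex_Icc A x) (hcont A x hA0)
        (fun y hy => by
          rw [interior_Icc] at hy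
          exact (gderiv A y (by linarith [hy.1]) (ne_of_gt hA0)).differentiableAt.differentiableWithinAt)
        (fun y hy => by
          rw [interior_Icc] at hy
          obtain ⟨hy1, hy2⟩ := hy
          have h0y : (0:ℝ) < y := by linarith
          rw [(gderiv A y h0y (ne_of_gt hA0)).deriv]
          have : 1/y - 1/A = -((y - A)/(y*A)) := by field_simp; ring
          rw [this]
          have hyA : y * A ≤ 1 := by nlinarith
          have : (y - A) ≤ (y - A)/(y*A) := by
            rw [le_div_iff₀ (by positivity)]
            nlinarith
          linarith)
      exact this (Set.left_mem_Icc.2 h) (Set.right_mem_Icc.2 h) h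
  have hgA : g A = Real.log A := by simp [hg]
  rw [hgA] at key
  simp only [hg] at key
  have hring : (A - x)/A = -((x - A)/A) := by ring
  linarith

private lemma sumA {k : ℕ} (hk : 0 < k) (w : Fin k → ℝ) (hw : ∀ i, 1 ≤ w i) :
    (k:ℝ) * Real.log ((∑ i, w i)/k) ≤
      ∑ i, Real.log (w i) + (∑ i, (w i - (∑ j, w j)/k)^2)/2 := by
  have hk' : (0:ℝ) < k := by exact_mod_cast hk
  set A : ℝ := (∑ i, w i)/k with hA
  have hsumw : (k:ℝ) ≤ ∑ i, w i := by
    calc (k:ℝ) = ∑ _i : Fin k, (1:ℝ) := by simp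
    _ ≤ ∑ i, w i := Finset.sum_le_sum fun i _ => hw i
  have hA1 : 1 ≤ A := by rw [hA, le_div_iff₀ hk']; linarith
  have hpt : ∀ i, Real.log A - Real.log (w i) ≤ (A - w i)/A + (w i - A)^2/2 :=
    fun i => la hA1 (hw i)
  have hsum := Finset.sum_le_sum (fun i (_ : i ∈ Finset.univ) => hpt i)
  have e1 : ∑ i : Fin k, (Real.log A - Real.log (w i)) =
      (k:ℝ) * Real.log A - ∑ i, Real.log (w i) := by
    rw [Finset.sum_sub_distrib, Finset.sum_const, Finset.card_univ, Fintype.card_fin,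
      nsmul_eq_mul]
  have e2 : ∑ i : Fin k, ((A - w i)/A + (w i - A)^2/2) =
      ((k:ℝ) * A - ∑ i, w i)/A + (∑ i, (w i - A)^2)/2 := by
    rw [Finset.sum_add_distrib, ← Finset.sum_div, ← Finset.sum_div, Finset.sum_sub_distrib,
      Finset.sum_const, Finset.card_univ, Fintype.card_fin, nsmul_eq_mul]
  have e3 : (k:ℝ) * A - ∑ i, w i = 0 := by
    rw [hA]; field_simp; ring
  rw [e1, e2, e3] at hsum
  simp only [zero_div] at hsum
  linarith

private lemma sumB {k : ℕ} (hk : 0 < k) (w : Fin k → ℝ) (hw0 : ∀ i, 0 < w i)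
    (hw1 : ∀ i, w i ≤ 1) :
    ∑ i, Real.log (w i) + (∑ i, (w i - (∑ j, w j)/k)^2)/2 ≤
      (k:ℝ) * Real.log ((∑ i, w i)/k) := by
  have hk' : (0:ℝ) < k := by exact_mod_cast hk
  set A : ℝ := (∑ i, w i)/k with hA
  have : Nonempty (Fin k) := Fin.pos_iff_nonempty.mp hk
  have hA0 : 0 < A := by
    apply div_pos _ hk'
    exact Finset.sum_pos (fun i _ => hw0 i) Finset.univ_nonempty
  have hA1 : A ≤ 1 := by
    rw [hA, div_le_one hk']
    calc ∑ i, w i ≤ ∑ _i : Fin k, (1:ℝ) := Finset.sum_le_sum fun i _ => hw1 i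
    _ = (k:ℝ) := by simp
  have hpt : ∀ i, Real.log (w i) - Real.log A ≤ (w i - A)/A - (w i - A)^2/2 :=
    fun i => lb hA0 hA1 (hw0 i) (hw1 i)
  have hsum := Finset.sum_le_sum (fun i (_ : i ∈ Finset.univ) => hpt i)
  have e1 : ∑ i : Fin k, (Real.log (w i) - Real.log A) =
      ∑ i, Real.log (w i) - (k:ℝ) * Real.log A := by
    rw [Finset.sum_sub_distrib, Finset.sum_const, Finset.card_univ, Fintype.card_fin,
      nsmul_eq_mul]
  have e2 : ∑ i : Fin k, ((w i - A)/A - (w i - A)^2/2) =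
      (∑ i, w i - (k:ℝ) * A)/A - (∑ i, (w i - A)^2)/2 := by
    rw [Finset.sum_sub_distrib, ← Finset.sum_div, ← Finset.sum_div, Finset.sum_sub_distrib,
      Finset.sum_const, Finset.card_univ, Fintype.card_fin, nsmul_eq_mul]
  have e3 : ∑ i, w i - (k:ℝ) * A = 0 := by
    rw [hA]; field_simp; ring
  rw [e1, e2, e3] at hsum
  simp only [zero_div] at hsum
  linarith

private lemma charpoly_conj (P B Q : Matrix (Fin m) (Fin m) ℝ) (h : P * Q = 1) :
    (P * B * Q).charpoly = B.charpoly := by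
  let P' := (C : ℝ →+* ℝ[X]).mapMatrix P
  let Q' := (C : ℝ →+* ℝ[X]).mapMatrix Q
  have hPQ' : P' * Q' = 1 := by
    show (C : ℝ →+* ℝ[X]).mapMatrix P * (C : ℝ →+* ℝ[X]).mapMatrix Q = 1
    rw [← RingHom.map_mul, h]
    simp
  have hcomm : P' * Matrix.scalar (Fin m) (X : ℝ[X]) = Matrix.scalar (Fin m) (X : ℝ[X]) * P' :=
    (Matrix.scalar_commute (X : ℝ[X]) (fun r' => Commute.all _ _) P').symm
  have hcm : charmatrix (P * B * Q) = P' * charmatrix B * Q' := by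
    unfold charmatrix
    rw [Matrix.mul_sub, Matrix.sub_mul]
    congr 1
    · symm
      rw [hcomm, Matrix.mul_assoc, hPQ', Matrix.mul_one]
    · show _ = P' * (C : ℝ →+* ℝ[X]).mapMatrix B * Q'
      simp only [P', Q', ← RingHom.map_mul]
  unfold Matrix.charpoly
  rw [hcm, Matrix.det_mul, Matrix.det_mul]
  have hdet : P'.det * Q'.det = 1 := by rw [← Matrix.det_mul, hPQ', Matrix.det_one]
  calc P'.det * B.charmatrix.det * Q'.det = P'.det * Q'.det * B.charmatrix.det := by ring
  _ = B.charmatrix.det := by rw [hdet, one_mul]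

private lemma charmatrix_diagonal (d : Fin m → ℝ) :
    charmatrix (Matrix.diagonal d) = Matrix.diagonal (fun i => (X : ℝ[X]) - C (d i)) := by
  ext i j
  by_cases h : i = j
  · subst h; simp
  · simp [h, Matrix.diagonal_apply_ne _ h]

private lemma charpoly_diagonal (d : Fin m → ℝ) :
    (Matrix.diagonal d).charpoly = ∏ i, ((X : ℝ[X]) - C (d i)) := by
  unfold Matrix.charpoly
  rw [charmatrix_diagonal, Matrix.det_diagonal]

private lemma charpoly_hermitian (A : Matrix (Fin m) (Fin m) ℝ) (hA : A.IsHermitian) :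
    A.charpoly = ∏ i, ((X : ℝ[X]) - C (hA.eigenvalues i)) := by
  have hU : (hA.eigenvectorUnitary : Matrix (Fin m) (Fin m) ℝ) *
      (star (hA.eigenvectorUnitary : Matrix (Fin m) (Fin m) ℝ)) = 1 :=
    (Matrix.mem_unitaryGroup_iff).mp hA.eigenvectorUnitary.2
  have hdiag : Matrix.diagonal ((RCLike.ofReal : ℝ → ℝ) ∘ hA.eigenvalues) =
      Matrix.diagonal hA.eigenvalues := by
    congr 1
  conv_lhs => rw [hA.spectral_theorem]
  rw [Unitary.conjStarAlgAut_apply, hdiag, charpoly_conj _ _ _ hU, charpoly_diagonal]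

private lemma roots_charpoly_hermitian (A : Matrix (Fin m) (Fin m) ℝ) (hA : A.IsHermitian) :
    A.charpoly.roots = Multiset.map hA.eigenvalues Finset.univ.val := by
  rw [charpoly_hermitian A hA]
  have : ∏ i, ((X : ℝ[X]) - C (hA.eigenvalues i)) =
      ((Multiset.map hA.eigenvalues Finset.univ.val).map (fun a => (X:ℝ[X]) - C a)).prod := by
    rw [Multiset.map_map]
    rfl
  rw [this, Polynomial.roots_multiset_prod_X_sub_C]

private lemma eig_inv_multiset (F : Matrix (Fin m) (Fin m) ℝ) (hF : IsUnit F.det) :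
    Multiset.map ((Matrix.isHermitian_conjTranspose_mul_self F⁻¹).eigenvalues) Finset.univ.val =
      Multiset.map (fun i => ((Matrix.isHermitian_conjTranspose_mul_self F).eigenvalues i)⁻¹)
        Finset.univ.val := by
  set A := Fᴴ * F with hAdef
  have hA : A.IsHermitian := Matrix.isHermitian_conjTranspose_mul_self F
  set B := F * Fᴴ with hBdef
  have hB : B.IsHermitian := Matrix.isHermitian_mul_conjTranspose_self F
  have hFinv : F * F⁻¹ = 1 := Matrix.mul_nonsing_inv F hF
  have hFinv' : F⁻¹ * F = 1 := Matrix.nonsing_inv_mul F hF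
  -- B = F * A * F⁻¹
  have hBA : B = F * A * F⁻¹ := by
    rw [hAdef, hBdef, ← Matrix.mul_assoc, Matrix.mul_assoc (F * Fᴴ), hFinv, Matrix.mul_one]
  -- eigenvalue multisets of A and B agree
  have hchar : B.charpoly = A.charpoly := by rw [hBA]; exact charpoly_conj F A F⁻¹ hFinv
  have hmul : Multiset.map hB.eigenvalues Finset.univ.val =
      Multiset.map hA.eigenvalues Finset.univ.val := by
    rw [← roots_charpoly_hermitian A hA, ← roots_charpoly_hermitian B hB, hchar]
  -- (F⁻¹)ᴴ * F⁻¹ = B⁻¹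
  have hinv : (F⁻¹)ᴴ * F⁻¹ = B⁻¹ := by
    rw [hBdef, Matrix.mul_inv_rev, Matrix.conjTranspose_nonsing_inv]
  -- spectral theorem for B and inverse
  have hU : (hB.eigenvectorUnitary : Matrix (Fin m) (Fin m) ℝ) *
      (star (hB.eigenvectorUnitary : Matrix (Fin m) (Fin m) ℝ)) = 1 :=
    (Matrix.mem_unitaryGroup_iff).mp hB.eigenvectorUnitary.2
  have hU' : (star (hB.eigenvectorUnitary : Matrix (Fin m) (Fin m) ℝ)) *
      (hB.eigenvectorUnitary : Matrix (Fin m) (Fin m) ℝ) = 1 :=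
    (Matrix.mem_unitaryGroup_iff').mp hB.eigenvectorUnitary.2
  set U := (hB.eigenvectorUnitary : Matrix (Fin m) (Fin m) ℝ) with hUdef
  have hUinv : U⁻¹ = star U := Matrix.inv_eq_left_inv hU'
  have hUinv' : (star U)⁻¹ = U := Matrix.inv_eq_left_inv hU
  have hdiag : Matrix.diagonal ((RCLike.ofReal : ℝ → ℝ) ∘ hB.eigenvalues) =
      Matrix.diagonal hB.eigenvalues := by congr 1
  have hBspec : B = U * Matrix.diagonal hB.eigenvalues * star U := by
    conv_lhs => rw [hB.spectral_theorem]
    rw [Unitary.conjStarAlgAut_apply, hdiag]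
  have hdetB : B.det ≠ 0 := by
    rw [hBdef, Matrix.det_mul, Matrix.det_conjTranspose]
    have : F.det ≠ 0 := hF.ne_zero
    simpa using mul_ne_zero this this
  have heig0 : ∀ i, hB.eigenvalues i ≠ 0 := by
    intro i hi
    apply hdetB
    rw [hB.det_eq_prod_eigenvalues]
    exact Finset.prod_eq_zero (Finset.mem_univ i) (by simp [hi])
  have hDinv : (Matrix.diagonal hB.eigenvalues)⁻¹ =
      Matrix.diagonal (fun i => (hB.eigenvalues i)⁻¹) := by
    apply Matrix.inv_eq_right_inv
    rw [Matrix.diagonal_mul_diagonal]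
    have : (fun i => hB.eigenvalues i * (hB.eigenvalues i)⁻¹) = fun _ => (1:ℝ) := by
      funext i; exact mul_inv_cancel₀ (heig0 i)
    rw [this, Matrix.diagonal_one]
  have hBinv : B⁻¹ = U * Matrix.diagonal (fun i => (hB.eigenvalues i)⁻¹) * star U := by
    conv_lhs => rw [hBspec]
    rw [Matrix.mul_inv_rev, Matrix.mul_inv_rev, hUinv, hUinv', hDinv, ← Matrix.mul_assoc]
  -- charpoly of B⁻¹
  have hcharinv : (B⁻¹).charpoly = ∏ i, ((X:ℝ[X]) - C ((hB.eigenvalues i)⁻¹)) := by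
    rw [hBinv, charpoly_conj _ _ _ hU, _root_.charpoly_diagonal]
  -- roots both ways
  have h1 : Multiset.map ((Matrix.isHermitian_conjTranspose_mul_self F⁻¹).eigenvalues)
      Finset.univ.val = (B⁻¹).charpoly.roots := by
    rw [← roots_charpoly_hermitian _ (Matrix.isHermitian_conjTranspose_mul_self F⁻¹)]
    congr 2
  have h2 : (B⁻¹).charpoly.roots =
      Multiset.map (fun i => (hB.eigenvalues i)⁻¹) Finset.univ.val := by
    rw [hcharinv]
    have : ∏ i, ((X : ℝ[X]) - C ((hB.eigenvalues i)⁻¹)) =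
        ((Multiset.map (fun i => (hB.eigenvalues i)⁻¹) Finset.univ.val).map
          (fun a => (X:ℝ[X]) - C a)).prod := by
      rw [Multiset.map_map]; rfl
    rw [this, Polynomial.roots_multiset_prod_X_sub_C]
  rw [h1, h2]
  have e1 : Multiset.map (fun i => (hB.eigenvalues i)⁻¹) Finset.univ.val =
      Multiset.map Inv.inv (Multiset.map hB.eigenvalues Finset.univ.val) := by
    rw [Multiset.map_map]; rfl
  have e2 : Multiset.map (fun i => (hA.eigenvalues i)⁻¹) Finset.univ.val =
      Multiset.map Inv.inv (Multiset.map hA.eigenvalues Finset.univ.val) := by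
    rw [Multiset.map_map]; rfl
  rw [e1, e2, hmul]

private lemma eig_pos (F : Matrix (Fin m) (Fin m) ℝ) (hF : IsUnit F.det) (i : Fin m) :
    0 < (Matrix.isHermitian_conjTranspose_mul_self F).eigenvalues i := by
  have hnn := (Matrix.posSemidef_conjTranspose_mul_self F).eigenvalues_nonneg i
  rcases lt_or_eq_of_le hnn with h | h
  · exact h
  exfalso
  have hdet : (Fᴴ * F).det ≠ 0 := by
    rw [Matrix.det_mul, Matrix.det_conjTranspose]
    have : F.det ≠ 0 := hF.ne_zero
    simpa using mul_ne_zero this this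
  apply hdet
  rw [(Matrix.isHermitian_conjTranspose_mul_self F).det_eq_prod_eigenvalues]
  exact Finset.prod_eq_zero (Finset.mem_univ i) (by rw [← h]; simp)

private lemma svals_pos (F : Matrix (Fin m) (Fin m) ℝ) (hF : IsUnit F.det) (i : Fin m) :
    0 < svals F i :=
  Real.sqrt_pos.2 (eig_pos F hF i)

private lemma prod_svals (F : Matrix (Fin m) (Fin m) ℝ) (hF : IsUnit F.det) :
    ∏ i, svals F i = |F.det| := by
  have hnn : ∀ i, 0 ≤ (Matrix.isHermitian_conjTranspose_mul_self F).eigenvalues i :=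
    fun i => (Matrix.posSemidef_conjTranspose_mul_self F).eigenvalues_nonneg i
  have hP : (∏ i, svals F i)^2 = F.det^2 := by
    rw [← Finset.prod_pow]
    have : ∀ i ∈ Finset.univ, (svals F i)^2 =
        (Matrix.isHermitian_conjTranspose_mul_self F).eigenvalues i := by
      intro i _
      exact Real.sq_sqrt (hnn i)
    rw [Finset.prod_congr rfl this]
    have hdet := (Matrix.isHermitian_conjTranspose_mul_self F).det_eq_prod_eigenvalues
    rw [Matrix.det_mul, Matrix.det_conjTranspose] at hdet
    simp only [star_trivial, RCLike.ofReal_real_eq_id, id_eq] at hdet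
    rw [← hdet]; ring
  have h1 : ∏ i, svals F i = Real.sqrt ((∏ i, svals F i)^2) :=
    (Real.sqrt_sq (Finset.prod_nonneg fun i _ => Real.sqrt_nonneg _)).symm
  rw [h1, hP, Real.sqrt_sq_eq_abs]

private lemma svals_inv_multiset (F : Matrix (Fin m) (Fin m) ℝ) (hF : IsUnit F.det) :
    Multiset.map (svals F⁻¹) Finset.univ.val =
      Multiset.map (fun i => (svals F i)⁻¹) Finset.univ.val := by
  have h := eig_inv_multiset F hF
  have e1 : Multiset.map (svals F⁻¹) Finset.univ.val =
      Multiset.map Real.sqrt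
        (Multiset.map ((Matrix.isHermitian_conjTranspose_mul_self F⁻¹).eigenvalues)
          Finset.univ.val) := by
    rw [Multiset.map_map]; rfl
  have e2 : Multiset.map (fun i => (svals F i)⁻¹) Finset.univ.val =
      Multiset.map Real.sqrt
        (Multiset.map (fun i => ((Matrix.isHermitian_conjTranspose_mul_self F).eigenvalues i)⁻¹)
          Finset.univ.val) := by
    rw [Multiset.map_map]
    congr 1
    funext i
    simp only [Function.comp_apply]
    exact (Real.sqrt_inv _).symm
  rw [e1, e2, h]

private lemma comp_perm_multiset {α : Type*} (f : Fin m → α) (e : Equiv.Perm (Fin m)) :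
    Multiset.map (f ∘ e) Finset.univ.val = Multiset.map f Finset.univ.val := by
  conv_rhs => rw [← Finset.map_univ_equiv e]
  rw [Finset.map_val, Multiset.map_map]
  rfl

private lemma svDesc_antitone (M : Matrix (Fin m) (Fin m) ℝ) : Antitone (svDesc M) := by
  intro i j hij
  have h := Tuple.monotone_sort (svals M) (Fin.rev_le_rev.2 hij)
  exact h

private lemma svDesc_multiset (M : Matrix (Fin m) (Fin m) ℝ) :
    Multiset.map (svDesc M) Finset.univ.val = Multiset.map (svals M) Finset.univ.val := by
  have : svDesc M = (svals M) ∘ (Fin.revPerm.trans (Tuple.sort (svals M))) := rfl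
  rw [this, comp_perm_multiset]

private lemma antitone_unique {f g : Fin m → ℝ} (hf : Antitone f) (hg : Antitone g)
    (h : Multiset.map f Finset.univ.val = Multiset.map g Finset.univ.val) : f = g := by
  have huniv : (Finset.univ.val : Multiset (Fin m)) = ↑(List.finRange m) := rfl
  rw [huniv] at h
  have h' : (List.map f (List.finRange m) : Multiset ℝ) = ↑(List.map g (List.finRange m)) := by
    exact_mod_cast h
  have hperm : (List.map f (List.finRange m)).Perm (List.map g (List.finRange m)) :=
    Multiset.coe_eq_coe.1 h'
  rw [← List.ofFn_eq_map, ← List.ofFn_eq_map] at hperm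
  have hsf : List.Pairwise (fun a b : ℝ => b ≤ a) (List.ofFn f) := by
    rw [List.pairwise_ofFn]
    intro i j hij
    exact hf hij.le
  have hsg : List.Pairwise (fun a b : ℝ => b ≤ a) (List.ofFn g) := by
    rw [List.pairwise_ofFn]
    intro i j hij
    exact hg hij.le
  have : IsAntisymm ℝ (fun a b : ℝ => b ≤ a) := ⟨fun a b h1 h2 => le_antisymm h2 h1⟩
  exact List.ofFn_injective (List.Perm.eq_of_pairwise' hsf hsg hperm)

private lemma svDesc_pos (M : Matrix (Fin m) (Fin m) ℝ) (hM : IsUnit M.det) (i : Fin m) :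
    0 < svDesc M i := svals_pos M hM _

private lemma svDesc_prod (M : Matrix (Fin m) (Fin m) ℝ) (hM : IsUnit M.det) :
    ∏ i, svDesc M i = |M.det| := by
  rw [← prod_svals M hM, Finset.prod_eq_multiset_prod, Finset.prod_eq_multiset_prod,
    svDesc_multiset]

private lemma svDesc_inv (F : Matrix (Fin m) (Fin m) ℝ) (hF : IsUnit F.det) :
    svDesc F⁻¹ = fun i => (svDesc F i.rev)⁻¹ := by
  apply antitone_unique (svDesc_antitone F⁻¹)
  · intro i j hij
    simp only
    apply inv_anti₀
    · exact svDesc_pos F hF _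
    · exact svDesc_antitone F (Fin.rev_le_rev.2 hij)
  · rw [svDesc_multiset]
    have e1 : (fun i => (svDesc F i.rev)⁻¹) = (fun i => (svDesc F i)⁻¹) ∘ Fin.revPerm := rfl
    rw [e1, comp_perm_multiset]
    have e2 : Multiset.map (fun i => (svDesc F i)⁻¹) Finset.univ.val =
        Multiset.map Inv.inv (Multiset.map (svDesc F) Finset.univ.val) := by
      rw [Multiset.map_map]; rfl
    rw [e2, svDesc_multiset, Multiset.map_map, svals_inv_multiset F hF]
    rfl
private lemma logsum {k : ℕ} (hk : 0 < k) (d : Fin (k+1) → ℝ) (hdp : ∀ i, 0 < d i)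
    (c : ℝ) (hc : 0 < c) (hprod : ∏ i, d i = c) :
    ∑ i : Fin k, Real.log (d i.succ) = Real.log c - Real.log (d 0) := by
  have h := Real.log_prod (s := Finset.univ) (f := d) (fun i _ => (hdp i).ne')
  rw [hprod] at h
  rw [h, Fin.sum_univ_succ]
  ring

set_option maxHeartbeats 2000000 in
private lemma core {k : ℕ} (hk : 0 < k) (dt ds : Fin (k+1) → ℝ)
    (hdta : Antitone dt) (hdsa : Antitone ds)
    (hdtp : ∀ i, 0 < dt i) (hdsp : ∀ i, 0 < ds i)
    (c : ℝ) (hc : 0 < c) (hprodt : ∏ i, dt i = c) (hprods : ∏ i, ds i = c)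
    (hopt : dt 0 ≤ ds 0) :
    (∑ i, ((dt i)⁻¹)^2) / (∑ i, ((ds i)⁻¹)^2) ≤
      (((k:ℝ)+1)/(k : ℝ)) *
        Real.exp ((empVar (fun i : Fin k => (dt 1)^2/(dt i.succ)^2) -
          empVar (fun i : Fin k => (ds (Fin.last k))^2/(ds i.succ)^2))/2) := by
  have hkR : (0:ℝ) < k := by exact_mod_cast hk
  set wt : Fin k → ℝ := fun i => (dt 1)^2/(dt i.succ)^2 with hwt
  set ws : Fin k → ℝ := fun i => (ds (Fin.last k))^2/(ds i.succ)^2 with hws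
  have hwt1 : ∀ i, 1 ≤ wt i := by
    intro i
    rw [hwt]
    have hv : (1 : Fin (k+1)).val = 1 := by
      rw [Fin.val_one']
      exact Nat.mod_eq_of_lt (by omega)
    have h1 : dt i.succ ≤ dt 1 := hdta (by
      rw [Fin.le_def, hv, Fin.val_succ]; omega)
    have h2 : 0 < dt i.succ := hdtp _
    rw [le_div_iff₀ (pow_pos h2 2)]
    nlinarith
  have hws0 : ∀ i, 0 < ws i := by
    intro i
    exact div_pos (pow_pos (hdsp _) 2) (pow_pos (hdsp _) 2)
  have hws1 : ∀ i, ws i ≤ 1 := by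
    intro i
    rw [hws]
    have h1 : ds (Fin.last k) ≤ ds i.succ := hdsa (Fin.le_last _)
    have h2 : 0 < ds (Fin.last k) := hdsp _
    rw [div_le_one (pow_pos (hdsp _) 2)]
    nlinarith
  -- sums over the tail
  set St : ℝ := ∑ i : Fin k, ((dt i.succ)⁻¹)^2 with hSt
  set Ss : ℝ := ∑ i : Fin k, ((ds i.succ)⁻¹)^2 with hSs
  have hStpos : 0 < St :=
    Finset.sum_pos (fun i _ => pow_pos (inv_pos.2 (hdtp _)) 2)
      (Finset.univ_nonempty_iff.2 (Fin.pos_iff_nonempty.1 hk))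
  have hSspos : 0 < Ss :=
    Finset.sum_pos (fun i _ => pow_pos (inv_pos.2 (hdsp _)) 2)
      (Finset.univ_nonempty_iff.2 (Fin.pos_iff_nonempty.1 hk))
  -- St in terms of wt
  have hStW : St = (∑ i, wt i) * ((dt 1)⁻¹)^2 := by
    rw [hSt, Finset.sum_mul]
    apply Finset.sum_congr rfl
    intro i _
    rw [hwt]
    have h1 : dt i.succ ≠ 0 := (hdtp _).ne'
    have h2 : dt 1 ≠ 0 := (hdtp _).ne'
    field_simp
  have hSsW : Ss = (∑ i, ws i) * ((ds (Fin.last k))⁻¹)^2 := by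
    rw [hSs, Finset.sum_mul]
    apply Finset.sum_congr rfl
    intro i _
    rw [hws]
    have h1 : ds i.succ ≠ 0 := (hdsp _).ne'
    have h2 : ds (Fin.last k) ≠ 0 := (hdsp _).ne'
    field_simp
  -- log bounds
  have hWtpos : 0 < ∑ i, wt i := Finset.sum_pos
    (fun i _ => lt_of_lt_of_le one_pos (hwt1 i))
      (Finset.univ_nonempty_iff.2 (Fin.pos_iff_nonempty.1 hk))
  have hWspos : 0 < ∑ i, ws i := Finset.sum_pos (fun i _ => hws0 i)
      (Finset.univ_nonempty_iff.2 (Fin.pos_iff_nonempty.1 hk))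
  have hlogwt : ∑ i, Real.log (wt i) =
      2 * (k:ℝ) * Real.log (dt 1) - 2 * (Real.log c - Real.log (dt 0)) := by
    have : ∀ i ∈ Finset.univ, Real.log (wt i) =
        2 * Real.log (dt 1) - 2 * Real.log (dt i.succ) := by
      intro i _
      rw [hwt]
      simp only
      rw [Real.log_div (pow_pos (hdtp _) 2).ne' (pow_pos (hdtp _) 2).ne',
        Real.log_pow, Real.log_pow]
      push_cast; ring
    rw [Finset.sum_congr rfl this, Finset.sum_sub_distrib, Finset.sum_const, Finset.card_univ,
      Fintype.card_fin, ← Finset.mul_sum, logsum hk dt hdtp c hc hprodt, nsmul_eq_mul]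
    ring
  have hlogws : ∑ i, Real.log (ws i) =
      2 * (k:ℝ) * Real.log (ds (Fin.last k)) - 2 * (Real.log c - Real.log (ds 0)) := by
    have : ∀ i ∈ Finset.univ, Real.log (ws i) =
        2 * Real.log (ds (Fin.last k)) - 2 * Real.log (ds i.succ) := by
      intro i _
      rw [hws]
      simp only
      rw [Real.log_div (pow_pos (hdsp _) 2).ne' (pow_pos (hdsp _) 2).ne',
        Real.log_pow, Real.log_pow]
      push_cast; ring
    rw [Finset.sum_congr rfl this, Finset.sum_sub_distrib, Finset.sum_const, Finset.card_univ,
      Fintype.card_fin, ← Finset.mul_sum, logsum hk ds hdsp c hc hprods, nsmul_eq_mul]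
    ring
  -- variance identities
  have hVt : ∑ i, (wt i - (∑ j, wt j)/k)^2 = (k:ℝ) * empVar wt := by
    rw [empVar, mul_div_cancel₀ _ hkR.ne']
  have hVs : ∑ i, (ws i - (∑ j, ws j)/k)^2 = (k:ℝ) * empVar ws := by
    rw [empVar, mul_div_cancel₀ _ hkR.ne']
  have hA := sumA hk wt hwt1
  have hB := sumB hk ws hws0 hws1
  rw [hVt, hlogwt] at hA
  rw [hVs, hlogws] at hB
  -- log of St and Ss
  have hlogSt : Real.log St = Real.log (∑ i, wt i) - 2 * Real.log (dt 1) := by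
    rw [hStW, Real.log_mul hWtpos.ne' (pow_ne_zero 2 (inv_ne_zero (hdtp _).ne')),
      Real.log_pow, Real.log_inv]
    push_cast; ring
  have hlogSs : Real.log Ss = Real.log (∑ i, ws i) - 2 * Real.log (ds (Fin.last k)) := by
    rw [hSsW, Real.log_mul hWspos.ne' (pow_ne_zero 2 (inv_ne_zero (hdsp _).ne')),
      Real.log_pow, Real.log_inv]
    push_cast; ring
  -- log of the means
  have hlogAt : Real.log ((∑ i, wt i)/k) = Real.log (∑ i, wt i) - Real.log k :=
    Real.log_div hWtpos.ne' hkR.ne'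
  have hlogAs : Real.log ((∑ i, ws i)/k) = Real.log (∑ i, ws i) - Real.log k :=
    Real.log_div hWspos.ne' hkR.ne'
  rw [hlogAt] at hA
  rw [hlogAs] at hB
  -- combine: log St - log Ss ≤ (Vt - Vs)/2
  have hlog0 : Real.log (dt 0) ≤ Real.log (ds 0) := Real.log_le_log (hdtp 0) hopt
  have hkey : Real.log St ≤ Real.log Ss + (empVar wt - empVar ws)/2 := by
    have hmul : (k:ℝ) * Real.log St ≤
        (k:ℝ) * (Real.log Ss + (empVar wt - empVar ws)/2) := by
      rw [hlogSt, hlogSs]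
      linarith [hA, hB, hlog0]
    exact le_of_mul_le_mul_left hmul hkR
  have hStSs : St ≤ Real.exp ((empVar wt - empVar ws)/2) * Ss := by
    have := Real.exp_le_exp.2 hkey
    rw [Real.exp_log hStpos, Real.exp_add, Real.exp_log hSspos] at this
    linarith [this]
  -- assemble
  have hNt : ∑ i : Fin (k+1), ((dt i)⁻¹)^2 = ((dt 0)⁻¹)^2 + St := by
    rw [hSt, Fin.sum_univ_succ]
  have hNs : ∑ i : Fin (k+1), ((ds i)⁻¹)^2 = ((ds 0)⁻¹)^2 + Ss := by
    rw [hSs, Fin.sum_univ_succ]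
  have hNspos : 0 < ∑ i : Fin (k+1), ((ds i)⁻¹)^2 := by
    rw [hNs]; positivity
  rw [div_le_iff₀ hNspos]
  have hfirst : ((dt 0)⁻¹)^2 ≤ St / k := by
    rw [le_div_iff₀ hkR, hSt]
    have : ∀ i ∈ (Finset.univ : Finset (Fin k)), ((dt 0)⁻¹)^2 ≤ ((dt i.succ)⁻¹)^2 := by
      intro i _
      have h1 : dt i.succ ≤ dt 0 := hdta (Fin.zero_le _)
      have h2 : 0 < dt i.succ := hdtp _
      have := inv_anti₀ h2 h1
      nlinarith [inv_pos.2 (hdtp 0)]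
    calc ((dt 0)⁻¹)^2 * k = ∑ _i : Fin k, ((dt 0)⁻¹)^2 := by
          rw [Finset.sum_const, Finset.card_univ, Fintype.card_fin, nsmul_eq_mul]; ring
    _ ≤ ∑ i : Fin k, ((dt i.succ)⁻¹)^2 := Finset.sum_le_sum this
  have hchain : ∑ i : Fin (k+1), ((dt i)⁻¹)^2 ≤ (((k:ℝ)+1)/(k:ℝ)) * St := by
    rw [hNt]
    have : (((k:ℝ)+1)/(k:ℝ)) * St = St/k + St := by field_simp; ring
    linarith
  calc ∑ i : Fin (k+1), ((dt i)⁻¹)^2 ≤ (((k:ℝ)+1)/(k:ℝ)) * St := hchain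
  _ ≤ (((k:ℝ)+1)/(k:ℝ)) * (Real.exp ((empVar wt - empVar ws)/2) * Ss) := by
      apply mul_le_mul_of_nonneg_left hStSs (by positivity)
  _ ≤ (((k:ℝ)+1)/(k:ℝ)) * Real.exp ((empVar wt - empVar ws)/2) *
        (∑ i : Fin (k+1), ((ds i)⁻¹)^2) := by
      rw [hNs, mul_assoc]
      apply mul_le_mul_of_nonneg_left _ (by positivity)
      apply mul_le_mul_of_nonneg_left _ (by positivity)
      nlinarith [pow_pos (inv_pos.2 (hdsp 0)) 2]

end Aux

/-- Suboptimality bound for the H₂ surrogate.  For invertible m×m matrices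
F*, F̃ with |det F*| = |det F̃| = c > 0 and σ_max(F̃) ≤ σ_max(F*), writing
H₂(F) = Σᵢ σᵢ(F⁻¹)², σ̃ᵢ = σ₂(F̃)²/σⱼ(F̃)² and σ*ᵢ = σ_m(F*)²/σⱼ(F*)² (j = 2,…,m),
we have H₂(F̃)/H₂(F*) ≤ (m/(m−1))·exp((Var σ̃ − Var σ*)/2). -/
theorem stmt11 {m : ℕ} (hm : 1 < m)
    (Fstar Ftil : Matrix (Fin m) (Fin m) ℝ)
    (hFs : IsUnit Fstar.det) (hFt : IsUnit Ftil.det)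
    (c : ℝ) (hc : 0 < c) (hdets : |Fstar.det| = c) (hdett : |Ftil.det| = c)
    (hopt : svDesc Ftil ⟨0, by omega⟩ ≤ svDesc Fstar ⟨0, by omega⟩) :
    (∑ i, svDesc Ftil⁻¹ i ^ 2) / (∑ i, svDesc Fstar⁻¹ i ^ 2) ≤
      ((m : ℝ) / ((m : ℝ) - 1)) *
        Real.exp
          ((empVar (fun i : Fin (m - 1) =>
              svDesc Ftil ⟨1, by omega⟩ ^ 2 /
                svDesc Ftil ⟨(i : ℕ) + 1, by have := i.isLt; omega⟩ ^ 2) -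
            empVar (fun i : Fin (m - 1) =>
              svDesc Fstar ⟨m - 1, by omega⟩ ^ 2 /
                svDesc Fstar ⟨(i : ℕ) + 1, by have := i.isLt; omega⟩ ^ 2)) / 2) := by
  obtain ⟨k, rfl⟩ : ∃ k, m = k + 1 := ⟨m - 1, by omega⟩
  have hk : 0 < k := by omega
  set dt := svDesc Ftil with hdt
  set ds := svDesc Fstar with hds
  have hdta : Antitone dt := svDesc_antitone Ftil
  have hdsa : Antitone ds := svDesc_antitone Fstar
  have hdtp : ∀ i, 0 < dt i := fun i => svDesc_pos Ftil hFt i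
  have hdsp : ∀ i, 0 < ds i := fun i => svDesc_pos Fstar hFs i
  have hprodt : ∏ i, dt i = c := by rw [hdt, svDesc_prod Ftil hFt, hdett]
  have hprods : ∏ i, ds i = c := by rw [hds, svDesc_prod Fstar hFs, hdets]
  have hzero : ∀ (h : 0 < k+1), (⟨0, h⟩ : Fin (k+1)) = 0 := fun h => by
    ext; simp
  have hone : ∀ (h : (1:ℕ) < k+1), (⟨1, h⟩ : Fin (k+1)) = (1 : Fin (k+1)) := fun h => by
    ext; rw [Fin.val_one']; exact (Nat.mod_eq_of_lt (by omega)).symm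
  have hlast : ∀ (h : k+1-1 < k+1), (⟨k+1-1, h⟩ : Fin (k+1)) = Fin.last k := fun h => rfl
  have hsucc : ∀ (i : Fin (k+1-1)) (h : (i:ℕ)+1 < k+1),
      (⟨(i:ℕ)+1, h⟩ : Fin (k+1)) = Fin.succ (i : Fin k) := fun i h => rfl
  have hLHS : (∑ i, svDesc Ftil⁻¹ i ^ 2) = ∑ i, ((dt i)⁻¹)^2 := by
    rw [svDesc_inv Ftil hFt]
    exact Fintype.sum_equiv Fin.revPerm _ _ (fun i => rfl)
  have hRHS : (∑ i, svDesc Fstar⁻¹ i ^ 2) = ∑ i, ((ds i)⁻¹)^2 := by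
    rw [svDesc_inv Fstar hFs]
    exact Fintype.sum_equiv Fin.revPerm _ _ (fun i => rfl)
  rw [hLHS, hRHS]
  simp only [hzero, hone, hlast, hsucc] at hopt ⊢
  have hcast1 : ((k+1 : ℕ) : ℝ) = (k:ℝ)+1 := by push_cast; ring
  have hcast2 : ((k+1 : ℕ) : ℝ) - 1 = (k:ℝ) := by push_cast; ring
  rw [hcast1, show ((k:ℝ)+1-1) = (k:ℝ) from by ring]
  exact core hk dt ds hdta hdsa hdtp hdsp c hc hprodt hprods hopt
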